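/- Spin-spin correlation identity: for the Ising model on a finite graph G=(V,E) with arbitrary field h ∈ ℝ^V, λ_{β,h,V}(σ_x σ_y) = φ_{p,h,G}(x ↔ y) + φ_{p,h,G}( 1_{{x ↮ y}} · tanh(h(K_t)) · tanh(h(K_u)) ), where K_t, K_u are the connected components of x and y, h(K) = β Σ_{i∈K} h_i and p_{ij} = 1 - exp(-2βJ_{ij}). -/

import Mathlib

open Finset

noncomputable section

variable {V : Type}

/-- The spin value (±1) attached to a Boolean spin (`true ↔ +1`, `false ↔ -1`). -/
def spin (b : Bool) : ℝ := if b then 1 else -1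

/-- The subgraph of `G` whose open edges are the edges in `F`. -/
def openSub (G : SimpleGraph V) (F : Finset (Sym2 V)) : SimpleGraph V where
  Adj i j := G.Adj i j ∧ s(i, j) ∈ F
  symm := by
    constructor
    intro i j h
    exact ⟨h.1.symm, by rw [Sym2.eq_swap]; exact h.2⟩
  loopless := ⟨fun i h => G.irrefl h.1⟩

instance [Fintype V] (H : SimpleGraph V) : Fintype H.ConnectedComponent := by
  classical exact Fintype.ofSurjective H.connectedComponentMk Quot.exists_rep

/-- The vertex set of a connected component, as a `Finset`. -/
def compSupp [Fintype V] (H : SimpleGraph V) (c : H.ConnectedComponent) : Finset V := by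
  classical exact Finset.univ.filter fun v => H.connectedComponentMk v = c

/-- Kronecker delta `δ_{σ_i,σ_j}` of a configuration on an (unordered) edge. -/
def eDelta {S : Type} [DecidableEq S] (σ : V → S) : Sym2 V → ℝ :=
  Sym2.lift ⟨fun i j => if σ i = σ j then 1 else 0, fun _ _ => by simp [eq_comm]⟩

/-- Product of spins `σ_i σ_j` on an (unordered) edge. -/
def eProd (σ : V → Bool) : Sym2 V → ℝ :=
  Sym2.lift ⟨fun i j => spin (σ i) * spin (σ j), fun _ _ => mul_comm _ _⟩

/-- The consistency indicator `Δ(σ,ω)`: equal to `1` iff `σ` is constant on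
every open edge of the configuration `F`. -/
def Delta (G : SimpleGraph V) (F : Finset (Sym2 V)) (σ : V → Bool) : ℝ := by
  classical exact if ∀ i j, G.Adj i j → s(i, j) ∈ F → σ i = σ j then 1 else 0

/-- The Bernoulli factor `B_J(ω) = ∏_{e open} p_e ∏_{e closed} (1-p_e)`. -/
def bern [Fintype V] [DecidableEq V] (G : SimpleGraph V) [DecidableRel G.Adj]
    (p : Sym2 V → ℝ) (F : Finset (Sym2 V)) : ℝ :=
  (∏ e ∈ F, p e) * ∏ e ∈ G.edgeFinset \ F, (1 - p e)

/-- The (unnormalized) Ising Boltzmann weight with free boundary condition. -/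
def isingW [Fintype V] [DecidableEq V] (G : SimpleGraph V) [DecidableRel G.Adj]
    (β : ℝ) (J : Sym2 V → ℝ) (h : V → ℝ) (σ : V → Bool) : ℝ :=
  Real.exp (β * ((∑ e ∈ G.edgeFinset, J e * eProd σ e) + ∑ i, h i * spin (σ i)))

/-- The random-cluster weight `B_J(ω) ∏_α 2cosh(β Σ_{i∈K_α} h_i)`. -/
def rcW [Fintype V] [DecidableEq V] (G : SimpleGraph V) [DecidableRel G.Adj]
    (β : ℝ) (p : Sym2 V → ℝ) (h : V → ℝ) (F : Finset (Sym2 V)) : ℝ :=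
  bern G p F * ∏ c : (openSub G F).ConnectedComponent,
    2 * Real.cosh (β * ∑ i ∈ compSupp (openSub G F) c, h i)

/-- Expectation of `f` under the random-cluster measure with external field. -/
def rcE [Fintype V] [DecidableEq V] (G : SimpleGraph V) [DecidableRel G.Adj]
    (β : ℝ) (p : Sym2 V → ℝ) (h : V → ℝ) (f : Finset (Sym2 V) → ℝ) : ℝ :=
  (∑ F ∈ G.edgeFinset.powerset, f F * rcW G β p h F) /
    ∑ F ∈ G.edgeFinset.powerset, rcW G β p h F

/-- `h(K_z) = β Σ_{i ∈ K_z} h_i` for the component `K_z` of `z` in `F`. -/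
def hK [Fintype V] [DecidableEq V] (G : SimpleGraph V) (β : ℝ) (h : V → ℝ)
    (F : Finset (Sym2 V)) (z : V) : ℝ :=
  β * ∑ i ∈ compSupp (openSub G F) ((openSub G F).connectedComponentMk z), h i


section Aux

lemma spin_mul_self (b : Bool) : spin b * spin b = 1 := by cases b <;> simp [spin]

lemma two_cosh (t : ℝ) : Real.exp t + Real.exp (-t) = 2 * Real.cosh t := by
  rw [Real.cosh_eq]; ring

lemma tanh_mul_two_cosh (t : ℝ) :
    Real.tanh t * (2 * Real.cosh t) = Real.exp t - Real.exp (-t) := by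
  rw [Real.tanh_eq_sinh_div_cosh, Real.sinh_eq]
  have hc := (Real.cosh_pos t).ne'
  field_simp

lemma eDelta_mk (σ : V → Bool) (i j : V) :
    eDelta σ s(i, j) = if σ i = σ j then 1 else 0 := rfl

lemma eProd_mk (σ : V → Bool) (i j : V) :
    eProd σ s(i, j) = spin (σ i) * spin (σ j) := rfl

lemma edge_factor (β : ℝ) (J p : Sym2 V → ℝ)
    (hp : ∀ e, p e = 1 - Real.exp (-(2 * β) * J e)) (σ : V → Bool) (e : Sym2 V) :
    Real.exp (β * (J e * eProd σ e))
      = Real.exp (β * J e) * (p e * eDelta σ e + (1 - p e)) := by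
  classical
  induction e using Sym2.ind with
  | _ i j =>
    by_cases hij : σ i = σ j
    · have h1 : eProd σ s(i, j) = 1 := by
        rw [eProd_mk, hij, spin_mul_self]
      rw [h1, eDelta_mk, if_pos hij]
      have h2 : p s(i, j) * 1 + (1 - p s(i, j)) = 1 := by ring
      rw [h2, mul_one, mul_one]
    · have h1 : eProd σ s(i, j) = -1 := by
        rw [eProd_mk]
        cases hσi : σ i <;> cases hσj : σ j <;>
          simp [spin, hσi, hσj] at hij ⊢
      rw [h1, eDelta_mk, if_neg hij, mul_zero, zero_add, hp, sub_sub_cancel,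
        ← Real.exp_add]
      congr 1
      ring

lemma prod_eDelta_eq_Delta [Fintype V] [DecidableEq V]
    (G : SimpleGraph V) [DecidableRel G.Adj] (F : Finset (Sym2 V))
    (hF : F ⊆ G.edgeFinset) (σ : V → Bool) :
    ∏ e ∈ F, eDelta σ e = Delta G F σ := by
  classical
  unfold Delta
  split_ifs with hcond
  · refine Finset.prod_eq_one fun e he => ?_
    have heE := hF he
    revert he heE
    induction e using Sym2.ind with
    | _ i j =>
      intro he heE
      have hadj : G.Adj i j := by
        rwa [SimpleGraph.mem_edgeFinset, SimpleGraph.mem_edgeSet] at heE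
      rw [eDelta_mk, if_pos (hcond i j hadj he)]
  · push_neg at hcond
    obtain ⟨i, j, hadj, hmem, hne⟩ := hcond
    refine Finset.prod_eq_zero hmem ?_
    rw [eDelta_mk, if_neg hne]

lemma interaction_expand [Fintype V] [DecidableEq V]
    (G : SimpleGraph V) [DecidableRel G.Adj]
    (β : ℝ) (J p : Sym2 V → ℝ)
    (hp : ∀ e, p e = 1 - Real.exp (-(2 * β) * J e)) (σ : V → Bool) :
    Real.exp (β * ∑ e ∈ G.edgeFinset, J e * eProd σ e)
      = (∏ e ∈ G.edgeFinset, Real.exp (β * J e)) *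
        ∑ F ∈ G.edgeFinset.powerset, bern G p F * Delta G F σ := by
  classical
  rw [mul_sum, Real.exp_sum,
    Finset.prod_congr rfl fun e _ => edge_factor β J p hp σ e,
    Finset.prod_mul_distrib]
  congr 1
  rw [Finset.prod_add]
  refine Finset.sum_congr rfl fun F hF => ?_
  rw [Finset.prod_mul_distrib,
    prod_eDelta_eq_Delta G F (Finset.mem_powerset.mp hF) σ]
  unfold bern
  ring

lemma reach_eq (G : SimpleGraph V) (F : Finset (Sym2 V)) (σ : V → Bool)
    (hσ : ∀ i j, G.Adj i j → s(i, j) ∈ F → σ i = σ j)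
    {v w : V} (hr : (openSub G F).Reachable v w) : σ v = σ w := by
  obtain ⟨pw⟩ := hr
  induction pw with
  | nil => rfl
  | cons hadj _ ih => exact (hσ _ _ (show G.Adj _ _ ∧ s(_, _) ∈ F from hadj).1
    (show G.Adj _ _ ∧ s(_, _) ∈ F from hadj).2).trans ih

open scoped Classical in
lemma sum_delta_mul [Fintype V] [DecidableEq V] (G : SimpleGraph V) (F : Finset (Sym2 V))
    (g : (V → Bool) → ℝ) :
    ∑ σ : V → Bool, Delta G F σ * g σ
      = ∑ ε : (openSub G F).ConnectedComponent → Bool,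
          g (fun v => ε ((openSub G F).connectedComponentMk v)) := by
  classical
  have h1 : ∀ σ : V → Bool, Delta G F σ * g σ
      = if (∀ i j, G.Adj i j → s(i, j) ∈ F → σ i = σ j) then g σ else 0 := by
    intro σ
    unfold Delta
    split_ifs <;> simp
  rw [Finset.sum_congr rfl fun σ _ => h1 σ, ← Finset.sum_filter]
  refine Finset.sum_bij'
    (fun σ hσ => Quot.lift σ
      (fun a b (r : (openSub G F).Reachable a b) => by
        exact reach_eq G F σ (Finset.mem_filter.mp hσ).2 r))
    (fun ε _ => fun v => ε ((openSub G F).connectedComponentMk v))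
    (fun σ hσ => Finset.mem_univ _)
    (fun ε hε => ?_) (fun σ hσ => ?_) (fun ε hε => ?_) (fun σ hσ => ?_)
  · refine Finset.mem_filter.mpr ⟨Finset.mem_univ _, fun i j hadj hmem => ?_⟩
    exact congrArg ε (SimpleGraph.ConnectedComponent.sound
      (SimpleGraph.Adj.reachable (G := openSub G F)
        (show G.Adj i j ∧ s(i, j) ∈ F from ⟨hadj, hmem⟩)))
  · rfl
  · funext c
    obtain ⟨v, rfl⟩ := Quot.exists_rep c
    rfl
  · rfl

lemma mem_compSupp [Fintype V] (H : SimpleGraph V) (c : H.ConnectedComponent)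
    (i : V) : i ∈ compSupp H c ↔ H.connectedComponentMk i = c := by
  unfold compSupp
  simp

lemma field_decomp [Fintype V] (H : SimpleGraph V) (h : V → ℝ)
    (ε : H.ConnectedComponent → Bool) :
    ∑ i, h i * spin (ε (H.connectedComponentMk i))
      = ∑ c : H.ConnectedComponent,
          (∑ i ∈ compSupp H c, h i) * spin (ε c) := by
  classical
  rw [← Finset.sum_fiberwise Finset.univ (fun i => H.connectedComponentMk i)
    (fun i => h i * spin (ε (H.connectedComponentMk i)))]
  refine Finset.sum_congr rfl fun c _ => ?_
  rw [Finset.sum_mul]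
  refine Finset.sum_congr ?_ fun i hi => ?_
  · ext i
    simp [mem_compSupp]
  · have hic : H.connectedComponentMk i = c := (mem_compSupp H c i).mp hi
    rw [hic]

lemma sum_pi_bool {κ : Type} [Fintype κ] [DecidableEq κ] (q : κ → Bool → ℝ) :
    ∑ ε : κ → Bool, ∏ c, q c (ε c) = ∏ c, (q c true + q c false) := by
  classical
  have h1 := Finset.prod_univ_sum (fun _ : κ => (Finset.univ : Finset Bool)) q
  rw [Fintype.piFinset_univ] at h1
  rw [← h1]
  exact Finset.prod_congr rfl fun c _ => Fintype.sum_bool _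

lemma spin_true : spin true = (1 : ℝ) := rfl

lemma spin_false : spin false = (-1 : ℝ) := rfl

open scoped Classical in
lemma key0_abs {κ : Type} [Fintype κ] [DecidableEq κ] (β : ℝ) (S : κ → ℝ) :
    ∑ ε : κ → Bool, ∏ c, Real.exp (β * (S c * spin (ε c)))
      = ∏ c, 2 * Real.cosh (β * S c) := by
  rw [sum_pi_bool (fun c b => Real.exp (β * (S c * spin b)))]
  refine Finset.prod_congr rfl fun c _ => ?_
  have e1 : β * (S c * spin true) = β * S c := by rw [spin_true]; ring
  have e2 : β * (S c * spin false) = -(β * S c) := by rw [spin_false]; ring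
  rw [e1, e2, two_cosh]

open scoped Classical in
lemma key_abs {κ : Type} [Fintype κ] [DecidableEq κ] (β : ℝ) (S : κ → ℝ)
    (cx cy : κ) :
    ∑ ε : κ → Bool,
        spin (ε cx) * spin (ε cy) * ∏ c, Real.exp (β * (S c * spin (ε c)))
      = ((if cx = cy then 1 else 0)
          + (if ¬ cx = cy then 1 else 0) * Real.tanh (β * S cx) *
              Real.tanh (β * S cy))
        * ∏ c, 2 * Real.cosh (β * S c) := by
  have hstep : ∀ ε : κ → Bool,
      spin (ε cx) * spin (ε cy) * ∏ c, Real.exp (β * (S c * spin (ε c)))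
        = ∏ c, ((if c = cx then spin (ε c) else 1) *
            ((if c = cy then spin (ε c) else 1) *
              Real.exp (β * (S c * spin (ε c))))) := by
    intro ε
    rw [Finset.prod_mul_distrib, Finset.prod_mul_distrib,
      Finset.prod_ite_eq', Finset.prod_ite_eq',
      if_pos (Finset.mem_univ cx), if_pos (Finset.mem_univ cy), mul_assoc]
  rw [Finset.sum_congr rfl fun ε _ => hstep ε,
    sum_pi_bool (fun c b => (if c = cx then spin b else 1) *
      ((if c = cy then spin b else 1) * Real.exp (β * (S c * spin b))))]
  by_cases hxy : cx = cy
  · subst hxy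
    rw [if_pos rfl, if_neg (by simp)]
    have hpt : ∀ c : κ,
        (if c = cx then spin true else 1) *
            ((if c = cx then spin true else 1) *
              Real.exp (β * (S c * spin true)))
          + (if c = cx then spin false else 1) *
              ((if c = cx then spin false else 1) *
                Real.exp (β * (S c * spin false)))
          = 2 * Real.cosh (β * S c) := by
      intro c
      have e1 : β * (S c * spin true) = β * S c := by rw [spin_true]; ring
      have e2 : β * (S c * spin false) = -(β * S c) := by rw [spin_false]; ring
      have e1' : β * (S c * (1 : ℝ)) = β * S c := by ring
      have e2' : β * (S c * (-1 : ℝ)) = -(β * S c) := by ring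
      rcases eq_or_ne c cx with rfl | hc
      · simp only [eq_self_iff_true, if_true, spin_true, spin_false, e1, e2, e1', e2']
        linear_combination two_cosh (β * S c)
      · simp only [if_neg hc, e1, e2, e1', e2']
        linear_combination two_cosh (β * S c)
    rw [Finset.prod_congr rfl fun c _ => hpt c]
    ring
  · rw [if_neg hxy, if_pos hxy]
    have hpt : ∀ c : κ,
        (if c = cx then spin true else 1) *
            ((if c = cy then spin true else 1) *
              Real.exp (β * (S c * spin true)))
          + (if c = cx then spin false else 1) *
              ((if c = cy then spin false else 1) *
                Real.exp (β * (S c * spin false)))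
          = ((if c = cx then Real.tanh (β * S c) else 1) *
              (if c = cy then Real.tanh (β * S c) else 1)) *
            (2 * Real.cosh (β * S c)) := by
      intro c
      have e1 : β * (S c * spin true) = β * S c := by rw [spin_true]; ring
      have e2 : β * (S c * spin false) = -(β * S c) := by rw [spin_false]; ring
      have e1' : β * (S c * (1 : ℝ)) = β * S c := by ring
      have e2' : β * (S c * (-1 : ℝ)) = -(β * S c) := by ring
      by_cases hcx : c = cx
      · have hcy : ¬ c = cy := fun hc => hxy (hcx ▸ hc)
        simp only [if_pos hcx, if_neg hcy, spin_true, spin_false, e1, e2, e1', e2']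
        linear_combination -tanh_mul_two_cosh (β * S c)
      · by_cases hcy : c = cy
        · simp only [if_pos hcy, if_neg hcx, spin_true, spin_false, e1, e2, e1', e2']
          linear_combination -tanh_mul_two_cosh (β * S c)
        · simp only [if_neg hcx, if_neg hcy, e1, e2, e1', e2']
          linear_combination two_cosh (β * S c)
    rw [Finset.prod_congr rfl fun c _ => hpt c, Finset.prod_mul_distrib,
      Finset.prod_mul_distrib, Finset.prod_ite_eq', Finset.prod_ite_eq',
      if_pos (Finset.mem_univ cx), if_pos (Finset.mem_univ cy)]
    ring

lemma key0 [Fintype V] [DecidableEq V] (G : SimpleGraph V) (β : ℝ) (h : V → ℝ)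
    (F : Finset (Sym2 V)) :
    ∑ σ : V → Bool, Delta G F σ * Real.exp (β * ∑ i, h i * spin (σ i))
      = ∏ c : (openSub G F).ConnectedComponent,
          2 * Real.cosh (β * ∑ i ∈ compSupp (openSub G F) c, h i) := by
  classical
  rw [sum_delta_mul G F (fun σ => Real.exp (β * ∑ i, h i * spin (σ i)))]
  have hstep : ∀ ε : (openSub G F).ConnectedComponent → Bool,
      Real.exp (β * ∑ i, h i * spin (ε ((openSub G F).connectedComponentMk i)))
        = ∏ c, Real.exp (β *
            ((∑ i ∈ compSupp (openSub G F) c, h i) * spin (ε c))) := by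
    intro ε
    rw [field_decomp, mul_sum, Real.exp_sum]
  rw [Finset.sum_congr rfl fun ε _ => hstep ε]
  exact key0_abs β (fun c => ∑ i ∈ compSupp (openSub G F) c, h i)

open scoped Classical in
lemma key1 [Fintype V] [DecidableEq V] (G : SimpleGraph V) (β : ℝ) (h : V → ℝ)
    (F : Finset (Sym2 V)) (x y : V) :
    ∑ σ : V → Bool, Delta G F σ *
        (spin (σ x) * spin (σ y) * Real.exp (β * ∑ i, h i * spin (σ i)))
      = ((if (openSub G F).Reachable x y then 1 else 0)
          + (if ¬ (openSub G F).Reachable x y then 1 else 0) *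
              Real.tanh (hK G β h F x) * Real.tanh (hK G β h F y))
        * ∏ c : (openSub G F).ConnectedComponent,
            2 * Real.cosh (β * ∑ i ∈ compSupp (openSub G F) c, h i) := by
  classical
  rw [sum_delta_mul G F (fun σ =>
    spin (σ x) * spin (σ y) * Real.exp (β * ∑ i, h i * spin (σ i)))]
  have hstep : ∀ ε : (openSub G F).ConnectedComponent → Bool,
      spin (ε ((openSub G F).connectedComponentMk x)) *
          spin (ε ((openSub G F).connectedComponentMk y)) *
          Real.exp (β * ∑ i, h i * spin (ε ((openSub G F).connectedComponentMk i)))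
        = spin (ε ((openSub G F).connectedComponentMk x)) *
            spin (ε ((openSub G F).connectedComponentMk y)) *
            ∏ c, Real.exp (β *
              ((∑ i ∈ compSupp (openSub G F) c, h i) * spin (ε c))) := by
    intro ε
    rw [field_decomp, mul_sum, Real.exp_sum]
  rw [Finset.sum_congr rfl fun ε _ => hstep ε,
    key_abs β (fun c => ∑ i ∈ compSupp (openSub G F) c, h i)
      ((openSub G F).connectedComponentMk x)
      ((openSub G F).connectedComponentMk y)]
  unfold hK
  simp only [SimpleGraph.ConnectedComponent.eq]

lemma master [Fintype V] [DecidableEq V] (G : SimpleGraph V) [DecidableRel G.Adj]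
    (β : ℝ) (J p : Sym2 V → ℝ)
    (hp : ∀ e, p e = 1 - Real.exp (-(2 * β) * J e)) (h : V → ℝ)
    (f : (V → Bool) → ℝ) :
    ∑ σ : V → Bool, f σ * isingW G β J h σ
      = (∏ e ∈ G.edgeFinset, Real.exp (β * J e)) *
        ∑ F ∈ G.edgeFinset.powerset, bern G p F *
          ∑ σ : V → Bool, Delta G F σ *
            (f σ * Real.exp (β * ∑ i, h i * spin (σ i))) := by
  classical
  have hW : ∀ σ : V → Bool, isingW G β J h σ
      = (∏ e ∈ G.edgeFinset, Real.exp (β * J e)) *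
        (∑ F ∈ G.edgeFinset.powerset, bern G p F * Delta G F σ) *
        Real.exp (β * ∑ i, h i * spin (σ i)) := by
    intro σ
    unfold isingW
    rw [mul_add, Real.exp_add, interaction_expand G β J p hp σ]
  calc ∑ σ : V → Bool, f σ * isingW G β J h σ
      = ∑ σ : V → Bool, ∑ F ∈ G.edgeFinset.powerset,
          (∏ e ∈ G.edgeFinset, Real.exp (β * J e)) *
            (bern G p F * (Delta G F σ *
              (f σ * Real.exp (β * ∑ i, h i * spin (σ i))))) := by
        refine Finset.sum_congr rfl fun σ _ => ?_
        rw [hW σ, Finset.mul_sum, Finset.sum_mul, Finset.mul_sum]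
        exact Finset.sum_congr rfl fun F _ => by ring
    _ = ∑ F ∈ G.edgeFinset.powerset, ∑ σ : V → Bool,
          (∏ e ∈ G.edgeFinset, Real.exp (β * J e)) *
            (bern G p F * (Delta G F σ *
              (f σ * Real.exp (β * ∑ i, h i * spin (σ i))))) :=
        Finset.sum_comm
    _ = _ := by
        rw [Finset.mul_sum]
        refine Finset.sum_congr rfl fun F _ => ?_
        rw [Finset.mul_sum, Finset.mul_sum]

end Aux

open scoped Classical in
/-- Corollary (spin-spin correlation): the Ising two-point correlation in an
arbitrary magnetic field in terms of the random-cluster measure. -/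
theorem statement9 [Fintype V] [DecidableEq V]
    (G : SimpleGraph V) [DecidableRel G.Adj]
    (β : ℝ) (hβ : 0 < β)
    (J : Sym2 V → ℝ) (hJ : ∀ e ∈ G.edgeFinset, 0 ≤ J e)
    (h : V → ℝ)
    (p : Sym2 V → ℝ) (hp : ∀ e, p e = 1 - Real.exp (-(2 * β) * J e))
    (x y : V) (hxy : x ≠ y) :
    (∑ σ : V → Bool, spin (σ x) * spin (σ y) * isingW G β J h σ) /
        (∑ σ : V → Bool, isingW G β J h σ)
      = rcE G β p h (fun F => if (openSub G F).Reachable x y then 1 else 0)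
        + rcE G β p h (fun F => (if ¬ (openSub G F).Reachable x y then 1 else 0) *
            Real.tanh (hK G β h F x) * Real.tanh (hK G β h F y)) := by
  classical
  set C := ∏ e ∈ G.edgeFinset, Real.exp (β * J e) with hCdef
  have hC : 0 < C := Finset.prod_pos fun e _ => Real.exp_pos _
  have hnum : ∑ σ : V → Bool, spin (σ x) * spin (σ y) * isingW G β J h σ
      = C * ∑ F ∈ G.edgeFinset.powerset,
          ((if (openSub G F).Reachable x y then 1 else 0)
            + (if ¬ (openSub G F).Reachable x y then 1 else 0) *
                Real.tanh (hK G β h F x) * Real.tanh (hK G β h F y)) *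
            rcW G β p h F := by
    rw [master G β J p hp h (fun σ => spin (σ x) * spin (σ y))]
    congr 1
    refine Finset.sum_congr rfl fun F hF => ?_
    rw [key1 G β h F x y]
    unfold rcW
    ring
  have hden : ∑ σ : V → Bool, isingW G β J h σ
      = C * ∑ F ∈ G.edgeFinset.powerset, rcW G β p h F := by
    have hm := master G β J p hp h (fun _ => 1)
    simp only [one_mul] at hm
    rw [hm]
    congr 1
    refine Finset.sum_congr rfl fun F hF => ?_
    rw [key0 G β h F]
    rfl
  have hpos : 0 < ∑ σ : V → Bool, isingW G β J h σ :=
    Finset.sum_pos (fun σ _ => Real.exp_pos _) Finset.univ_nonempty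
  have hD : 0 < ∑ F ∈ G.edgeFinset.powerset, rcW G β p h F := by
    rw [hden] at hpos
    nlinarith
  rw [hnum, hden, mul_div_mul_left _ _ (ne_of_gt hC)]
  unfold rcE
  rw [← add_div, ← Finset.sum_add_distrib]
  congr 1
  exact Finset.sum_congr rfl fun F _ => (add_mul _ _ _)

end
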